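/- Pressing two non-adjacent black vertices u and v (both black in G) in either order yields the same resulting graph: (G·u)·v = (G·v)·u, and v remains black in G·u (and u black in G·v). -/

import Mathlib

structure BW (V : Type) where
  adj : V → V → Bool
  black : V → Bool
  symm : ∀ u w, adj u w = adj w u
  irrefl : ∀ v, adj v v = false

variable {V : Type} [DecidableEq V]

/-- Pressing a vertex `v`: neighbors toggle color, pairs of neighbors toggle
adjacency, and `v` becomes white and isolated. -/
def press (G : BW V) (v : V) : BW V where
  adj u w :=
    if u = v ∨ w = v ∨ u = w then false
    else xor (G.adj u w) (G.adj u v && G.adj w v)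
  black u := if u = v then false else xor (G.black u) (G.adj u v)
  symm := by
    intro u w
    by_cases h1 : u = v <;> by_cases h2 : w = v <;> by_cases h3 : u = w <;>
      simp_all [G.symm u w, Bool.xor_comm, Bool.and_comm] <;> tauto
  irrefl := by intro u; simp

/-- The graph obtained after pressing the vertices of a list in order. -/
def pressPath (G : BW V) : List V → BW V
  | [] => G
  | v :: P => pressPath (press G v) P

/-- A pressing path is valid if every vertex is black when it is pressed. -/
def ValidPath (G : BW V) : List V → Prop
  | [] => True
  | v :: P => G.black v = true ∧ ValidPath (press G v) P

/-- The all-white, edgeless graph. -/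
def AllWhiteEmpty (G : BW V) : Prop :=
  (∀ v, G.black v = false) ∧ ∀ u w, G.adj u w = false

/-- A successful pressing path: valid and leading to the all-white empty graph. -/
def Successful (G : BW V) (P : List V) : Prop :=
  ValidPath G P ∧ AllWhiteEmpty (pressPath G P)

/-- The underlying simple graph of a black-and-white graph. -/
def BW.toSimple (G : BW V) : SimpleGraph V where
  Adj u w := G.adj u w = true
  symm := ⟨fun u w h => (G.symm w u).trans h⟩
  loopless := ⟨fun v h => by simp [G.irrefl] at h⟩

/-- `l` enumerates the vertices as a path: `G` is linear with vertex order `l`. -/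
def IsPathList (G : BW V) (l : List V) : Prop :=
  l.Nodup ∧ (∀ v, v ∈ l) ∧
    ∀ u w, G.adj u w = true ↔ ∃ i,
      (l[i]? = some u ∧ l[i+1]? = some w) ∨ (l[i]? = some w ∧ l[i+1]? = some u)

/-- A linear (path) black-and-white graph. -/
def IsLinear (G : BW V) : Prop := ∃ l, IsPathList G l

/-- Adjacency step in the metagraph of successful pressing paths:
their longest common subsequence misses at most 2 presses. -/
def Step (G : BW V) (P Q : List V) : Prop :=
  Successful G P ∧ Successful G Q ∧
    ∃ R : List V, R.Sublist P ∧ R.Sublist Q ∧ P.length ≤ R.length + 2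

/-- Transposition of two consecutive presses which are non-adjacent at that moment. -/
def SwapStep (G : BW V) (P Q : List V) : Prop :=
  ∃ A u w B, P = A ++ u :: w :: B ∧ Q = A ++ w :: u :: B ∧
    (pressPath G A).adj u w = false

/-- The induced black-and-white graph on a subset of the vertices. -/
def BW.restrict (G : BW V) (p : V → Prop) [DecidablePred p] : BW {u // p u} where
  adj u w := G.adj u.1 w.1
  black u := G.black u.1
  symm := fun u w => G.symm u.1 w.1
  irrefl := fun u => G.irrefl u.1

/-- The all-black path graph on `n` vertices. -/
def pathAllBlack (n : ℕ) : BW (Fin n) where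
  adj i j := decide (i.1 + 1 = j.1 ∨ j.1 + 1 = i.1)
  black _ := true
  symm := by intro u w; simp [or_comm]
  irrefl := by intro v; simp


lemma BW.ext' {V : Type} {G H : BW V} (hadj : G.adj = H.adj)
    (hb : G.black = H.black) : G = H := by
  cases G; cases H; simp_all

/-- Pressing two non-adjacent black vertices commutes, and each remains black
after pressing the other. -/
theorem stmt5 {V : Type} [DecidableEq V] (G : BW V) (u v : V) (hne : u ≠ v)
    (hu : G.black u = true) (hv : G.black v = true) (hna : G.adj u v = false) :
    press (press G u) v = press (press G v) u ∧
    (press G u).black v = true ∧ (press G v).black u = true := by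
  have hna' : G.adj v u = false := (G.symm v u).trans hna
  have hne2 : v ≠ u := Ne.symm hne
  refine ⟨?_, ?_, ?_⟩
  · apply BW.ext'
    · funext a b
      simp only [press]
      by_cases hau : a = u <;> by_cases hbu : b = u <;>
        by_cases hav : a = v <;> by_cases hbv : b = v <;>
        by_cases hab : a = b <;>
        simp_all [hna, hna'] <;>
        cases h1 : G.adj a b <;> cases h2 : G.adj a u <;> cases h3 : G.adj b u <;>
        cases h4 : G.adj a v <;> cases h5 : G.adj b v <;> simp_all
    · funext a
      simp only [press]
      by_cases hau : a = u <;> by_cases hav : a = v <;>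
        simp_all [hna, hna'] <;>
        cases h1 : G.black a <;> cases h2 : G.adj a u <;> cases h3 : G.adj a v <;>
        simp_all
  · simp [press, hne.symm, hna', hv]
  · simp [press, hne, hna, hu]
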